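/- The categorical kernel is a positive semi-definite kernel: for every finite collection of points h^(1), …, h^(m) in the categorical space H and all real coefficients c_1, …, c_m, one has Σ_{i=1}^m Σ_{j=1}^m c_i c_j · k_h(h^(i), h^(j)) ≥ 0. -/
import Mathlib


/-- The categorical (exponentiated overlap) kernel
`k_h(h, h') = exp((1/d_h) Σ_i ℓ_i δ(h_i, h'_i))` on the categorical space
`H = ∏_{i=1}^{d_h} {1, …, n_i}` is a positive semi-definite kernel. -/
theorem categorical_kernel_psd
    (d : ℕ) (hd : 0 < d) (n : Fin d → ℕ) (ℓ : Fin d → ℝ) (hℓ : ∀ i, 0 ≤ ℓ i)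
    (m : ℕ) (h : Fin m → (∀ i : Fin d, Fin (n i))) (c : Fin m → ℝ) :
    0 ≤ ∑ i : Fin m, ∑ j : Fin m, c i * c j *
      Real.exp ((1 / (d : ℝ)) * ∑ k : Fin d,
        ℓ k * (if h i k = h j k then (1 : ℝ) else 0)) := by
  set s : Fin d → ℝ := fun k => Real.sqrt (Real.exp (ℓ k / d) - 1) with hs
  set u : (k : Fin d) → Fin (n k) → Fin (n k + 1) → ℝ :=
    fun k a b => if b = 0 then 1 else if b = a.succ then s k else 0 with hu
  have hnonneg : ∀ k : Fin d, 0 ≤ Real.exp (ℓ k / d) - 1 := by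
    intro k
    have : (0 : ℝ) ≤ ℓ k / d := div_nonneg (hℓ k) (by positivity)
    have := Real.one_le_exp this
    linarith
  have keyA : ∀ (k : Fin d) (a a' : Fin (n k)),
      ∑ b : Fin (n k + 1), u k a b * u k a' b
        = Real.exp ((ℓ k / d) * if a = a' then (1:ℝ) else 0) := by
    intro k a a'
    rw [Fin.sum_univ_succ]
    have h0 : u k a 0 * u k a' 0 = 1 := by simp [hu]
    have hrest : ∀ b : Fin (n k),
        u k a b.succ * u k a' b.succ
          = if b = a then (if b = a' then Real.exp (ℓ k / d) - 1 else 0) else 0 := by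
      intro b
      simp only [hu, Fin.succ_ne_zero, if_false, Fin.succ_inj]
      by_cases hba : b = a <;> by_cases hba' : b = a' <;>
        simp [hba, hba', hs, Real.mul_self_sqrt (hnonneg k)]
    rw [h0]
    simp only [hrest]
    rw [Finset.sum_ite_eq' Finset.univ a (fun b => if b = a' then Real.exp (ℓ k / d) - 1 else 0)]
    by_cases haa : a = a'
    · simp [haa]
    · simp [haa, Ne.symm haa]
  set Φ : Fin m → ((k : Fin d) → Fin (n k + 1)) → ℝ :=
    fun i g => ∏ k : Fin d, u k (h i k) (g k) with hΦ
  have key : ∀ i j : Fin m,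
      c i * c j * Real.exp ((1 / (d : ℝ)) * ∑ k : Fin d,
        ℓ k * (if h i k = h j k then (1 : ℝ) else 0))
      = ∑ g ∈ Fintype.piFinset (fun k : Fin d => (Finset.univ : Finset (Fin (n k + 1)))),
          (c i * Φ i g) * (c j * Φ j g) := by
    intro i j
    have e1 : (1 / (d : ℝ)) * ∑ k : Fin d, ℓ k * (if h i k = h j k then (1 : ℝ) else 0)
        = ∑ k : Fin d, (ℓ k / d) * (if h i k = h j k then (1 : ℝ) else 0) := by
      rw [Finset.mul_sum]; apply Finset.sum_congr rfl; intro k _; ring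
    rw [e1, Real.exp_sum]
    have e2 : ∏ k : Fin d, Real.exp ((ℓ k / d) * (if h i k = h j k then (1 : ℝ) else 0))
        = ∏ k : Fin d, ∑ b : Fin (n k + 1), u k (h i k) b * u k (h j k) b := by
      apply Finset.prod_congr rfl; intro k _; rw [keyA k (h i k) (h j k)]
    rw [e2, Finset.prod_univ_sum]
    rw [Finset.mul_sum]
    apply Finset.sum_congr rfl
    intro g _
    rw [hΦ]
    simp only []
    rw [Finset.prod_mul_distrib]
    ring
  calc (0:ℝ) ≤ ∑ g ∈ Fintype.piFinset (fun k : Fin d => (Finset.univ : Finset (Fin (n k + 1)))),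
        (∑ i : Fin m, c i * Φ i g) * (∑ j : Fin m, c j * Φ j g) :=
        Finset.sum_nonneg (fun g _ => mul_self_nonneg _)
    _ = ∑ i : Fin m, ∑ j : Fin m, c i * c j *
      Real.exp ((1 / (d : ℝ)) * ∑ k : Fin d,
        ℓ k * (if h i k = h j k then (1 : ℝ) else 0)) := by
        simp only [key, Finset.sum_mul_sum]
        rw [Finset.sum_comm]
        apply Finset.sum_congr rfl; intro i _
        rw [Finset.sum_comm]
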